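/- Let f be a polynomial in n variables with f(0)=0, and write f = f_2 + f_3 + ... as a sum of homogeneous components (so the components of degree 0 and 1 vanish). If the quadratic form f_2 is positive definite, then f is a sum of squares of formal power series in R[[x_1,...,x_n]]. -/

import Mathlib

namespace SosPowerSeriesAux

open MvPolynomial

variable {n : ℕ}




lemma deg_add (a b : Fin n →₀ ℕ) : (a + b).degree = a.degree + b.degree := by
  simp [Finsupp.degree_eq_weight_one, map_add]

lemma deg_single (j : Fin n) (k : ℕ) : (Finsupp.single j k).degree = k := by
  classical
  rcases eq_or_ne k 0 with rfl | hk
  · simp [Finsupp.degree]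
  · exact Finsupp.degree_single j k

lemma exists_single_add {e : Fin n →₀ ℕ} {k : ℕ} (h : e.degree = k + 1) :
    ∃ j e', e'.degree = k ∧ e = Finsupp.single j 1 + e' := by
  classical
  have hne : e ≠ 0 := by
    intro h0; rw [h0, map_zero] at h; omega
  obtain ⟨j, hj⟩ : ∃ j, e j ≠ 0 := by
    by_contra hc; push_neg at hc
    exact hne (Finsupp.ext fun i => hc i)
  have hej : 1 ≤ e j := Nat.one_le_iff_ne_zero.2 hj
  have heq : e = Finsupp.single j 1 + (e - Finsupp.single j 1) := by
    ext i
    simp only [Finsupp.coe_add, Pi.add_apply, Finsupp.coe_tsub, Pi.sub_apply]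
    rcases eq_or_ne i j with rfl | hij
    · rw [Finsupp.single_eq_same]; omega
    · rw [Finsupp.single_eq_of_ne' (Ne.symm hij)]; omega
  refine ⟨j, e - Finsupp.single j 1, ?_, heq⟩
  rw [heq, deg_add, deg_single] at h
  omega

lemma isHomog_smul {p : MvPolynomial (Fin n) ℝ} {d : ℕ} (c : ℝ)
    (hp : p.IsHomogeneous d) : (c • p).IsHomogeneous d := by
  rw [smul_eq_C_mul]
  simpa using (isHomogeneous_C _ c).mul hp

lemma hc_eq_zero_of_isHomog {p : MvPolynomial (Fin n) ℝ} {k d : ℕ}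
    (hp : p.IsHomogeneous k) (hdk : d ≠ k) : homogeneousComponent d p = 0 := by
  ext e
  rw [coeff_homogeneousComponent, coeff_zero]
  split_ifs with h
  · exact hp.coeff_eq_zero (by omega)
  · rfl

lemma hc_self_of_isHomog {p : MvPolynomial (Fin n) ℝ} {k : ℕ}
    (hp : p.IsHomogeneous k) : homogeneousComponent k p = p := by
  ext e
  rw [coeff_homogeneousComponent]
  split_ifs with h
  · rfl
  · exact (hp.coeff_eq_zero h).symm

lemma coeff_eq_zero_of_hc {p : MvPolynomial (Fin n) ℝ} {e : Fin n →₀ ℕ}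
    (h : homogeneousComponent e.degree p = 0) : coeff e p = 0 := by
  have h2 := coeff_homogeneousComponent (σ := Fin n) (R := ℝ) e.degree p e
  rw [h, coeff_zero, if_pos rfl] at h2
  exact h2.symm





lemma single_add_single_eq {i j a b : Fin n} :
    Finsupp.single i 1 + Finsupp.single j 1 = Finsupp.single a 1 + Finsupp.single b 1 ↔
      (i = a ∧ j = b) ∨ (i = b ∧ j = a) := by
  rw [Finsupp.single_add_single_eq_single_add_single one_ne_zero one_ne_zero]
  simp

lemma double_sum_eval (M : Fin n → Fin n → ℝ) (a b : Fin n) :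
    ∑ i, ∑ j, M i j * (if Finsupp.single i 1 + Finsupp.single j 1
        = Finsupp.single a 1 + Finsupp.single b 1 then (1:ℝ) else 0) =
      if a = b then M a a else M a b + M b a := by
  classical
  simp only [single_add_single_eq]
  rcases eq_or_ne a b with rfl | hab
  · rw [if_pos rfl]
    have h1 : ∀ i j : Fin n, (if (i = a ∧ j = a) ∨ (i = a ∧ j = a) then (1:ℝ) else 0)
        = if i = a ∧ j = a then 1 else 0 := by intro i j; simp
    simp only [h1, mul_ite, mul_one, mul_zero, ite_and]
    simp [Finset.sum_ite_eq']
  · rw [if_neg hab]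
    have h1 : ∀ i j : Fin n, (if (i = a ∧ j = b) ∨ (i = b ∧ j = a) then (1:ℝ) else 0)
        = (if i = a ∧ j = b then 1 else 0) + (if i = b ∧ j = a then 1 else 0) := by
      intro i j
      by_cases p1 : i = a ∧ j = b
      · by_cases p2 : i = b ∧ j = a
        · exact absurd (p1.1.symm.trans p2.1) hab
        · rcases p1 with ⟨rfl, rfl⟩
          simp [hab, Ne.symm hab]
      · simp [p1]
    simp only [h1, mul_add, Finset.sum_add_distrib, mul_ite, mul_one, mul_zero, ite_and]
    simp [Finset.sum_ite_eq']


lemma X_mul_X (i j : Fin n) : (X i * X j : MvPolynomial (Fin n) ℝ)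
    = monomial (Finsupp.single i 1 + Finsupp.single j 1) 1 := by
  rw [X, X, monomial_mul, one_mul]

lemma quad_rep (q : MvPolynomial (Fin n) ℝ) (hq : q.IsHomogeneous 2) :
    q = ∑ i, ∑ j, (coeff (Finsupp.single i 1 + Finsupp.single j 1) q
        * (if i = j then 1 else (1/2:ℝ))) • (X i * X j) := by
  classical
  ext e
  have hrhs : coeff e (∑ i, ∑ j, (coeff (Finsupp.single i 1 + Finsupp.single j 1) q
      * (if i = j then 1 else (1/2:ℝ))) • (X i * X j))
      = ∑ i, ∑ j, (coeff (Finsupp.single i 1 + Finsupp.single j 1) q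
        * (if i = j then 1 else (1/2:ℝ)))
        * (if Finsupp.single i 1 + Finsupp.single j 1 = e then (1:ℝ) else 0) := by
    rw [coeff_sum]
    refine Finset.sum_congr rfl fun i _ => ?_
    rw [coeff_sum]
    refine Finset.sum_congr rfl fun j _ => ?_
    rw [coeff_smul, X_mul_X, coeff_monomial, smul_eq_mul]
  rw [hrhs]
  by_cases he : e.degree = 2
  · obtain ⟨a, e', he', rfl⟩ := exists_single_add he
    obtain ⟨b, e'', he'', rfl⟩ := exists_single_add he'
    have hz : e'' = 0 := by rwa [Finsupp.degree_eq_zero_iff] at he''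
    subst hz
    rw [add_zero]
    rw [double_sum_eval (fun i j => coeff (Finsupp.single i 1 + Finsupp.single j 1) q
        * (if i = j then 1 else (1/2:ℝ))) a b]
    rcases eq_or_ne a b with rfl | hab
    · simp
    · rw [if_neg hab, if_neg hab, if_neg (Ne.symm hab),
        add_comm (Finsupp.single b 1) (Finsupp.single a 1)]
      ring
  · rw [hq.coeff_eq_zero he]
    refine (Finset.sum_eq_zero fun i _ => Finset.sum_eq_zero fun j _ => ?_).symm
    have hcond : ¬(Finsupp.single i 1 + Finsupp.single j 1 = e) := by
      intro hcontra
      apply he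
      rw [← hcontra, deg_add, deg_single, deg_single]
    rw [if_neg hcond, mul_zero]

open scoped MatrixOrder Matrix.Norms.L2Operator in
lemma exists_linear_forms (q : MvPolynomial (Fin n) ℝ) (hq : q.IsHomogeneous 2)
    (hpd : ∀ x : Fin n → ℝ, x ≠ 0 → 0 < eval x q) :
    ∃ ℓ : Fin n → MvPolynomial (Fin n) ℝ,
      (∀ i, (ℓ i).IsHomogeneous 1) ∧
      (∀ j, ∃ α : Fin n → ℝ, (X j : MvPolynomial (Fin n) ℝ) = ∑ i, α i • ℓ i) ∧
      (∑ i, ℓ i * ℓ i) = q := by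
  classical
  set c : Fin n → Fin n → ℝ := fun i j =>
    coeff (Finsupp.single i 1 + Finsupp.single j 1) q * (if i = j then 1 else (1/2:ℝ)) with hc
  have hrep : q = ∑ i, ∑ j, c i j • (X i * X j) := quad_rep q hq
  have hsymm : ∀ i j, c i j = c j i := by
    intro i j
    rw [hc]
    simp only
    rw [add_comm (Finsupp.single i 1)]
    rcases eq_or_ne i j with rfl | hij
    · rfl
    · rw [if_neg hij, if_neg (Ne.symm hij)]
  set Mq : Matrix (Fin n) (Fin n) ℝ := Matrix.of c with hMq
  have hherm : Mq.IsHermitian := by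
    ext i j
    simp only [Matrix.conjTranspose_apply, hMq, Matrix.of_apply, star_trivial]
    exact hsymm j i
  have heval : ∀ x : Fin n → ℝ, eval x q = dotProduct x (Mq.mulVec x) := by
    intro x
    conv_lhs => rw [hrep]
    rw [map_sum]
    simp only [dotProduct, Matrix.mulVec, Matrix.of_apply]
    refine Finset.sum_congr rfl fun i _ => ?_
    rw [map_sum, Finset.mul_sum]
    refine Finset.sum_congr rfl fun j _ => ?_
    simp only [smul_eq_C_mul, map_mul, eval_C, eval_X, hMq, Matrix.of_apply, hc]
    ring
  have hposdef : Mq.PosDef := by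
    refine Matrix.PosDef.of_dotProduct_mulVec_pos hherm fun x hx => ?_
    have : star x = x := by funext i; simp
    rw [this, ← heval]
    exact hpd x hx
  set S := CFC.sqrt Mq with hS
  have hS2 : S * S = Mq := CFC.sqrt_mul_sqrt_self Mq hposdef.posSemidef.nonneg
  have hSsymm : ∀ i j, S i j = S j i := by
    intro i j
    have h := (Matrix.nonneg_iff_posSemidef.1 (CFC.sqrt_nonneg Mq)).1.apply j i
    rwa [star_trivial] at h
  have hdet : IsUnit S.det := by
    have h1 : (0:ℝ) < Mq.det := hposdef.det_pos
    rw [← hS2, Matrix.det_mul] at h1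
    refine isUnit_iff_ne_zero.2 fun h => ?_
    rw [h, mul_zero] at h1
    exact lt_irrefl _ h1
  refine ⟨fun i => ∑ j, S i j • X j, ?_, ?_, ?_⟩
  · intro i
    refine IsHomogeneous.sum _ _ _ fun j _ => ?_
    exact isHomog_smul _ (isHomogeneous_X _ _)
  · intro j
    refine ⟨fun i => S⁻¹ j i, ?_⟩
    have h1 : ∀ i : Fin n, S⁻¹ j i • ∑ k, S i k • X k
        = ∑ k, (S⁻¹ j i * S i k) • (X k : MvPolynomial (Fin n) ℝ) := by
      intro i
      rw [Finset.smul_sum]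
      refine Finset.sum_congr rfl fun k _ => ?_
      rw [smul_smul]
    calc (X j : MvPolynomial (Fin n) ℝ)
        = ∑ k, ((1 : Matrix (Fin n) (Fin n) ℝ) j k) • X k := by
          simp [Matrix.one_apply, ite_smul]
      _ = ∑ k, ((S⁻¹ * S) j k) • X k := by rw [Matrix.nonsing_inv_mul S hdet]
      _ = ∑ k, (∑ i, S⁻¹ j i * S i k) • X k := by
          refine Finset.sum_congr rfl fun k _ => ?_
          rw [Matrix.mul_apply]
      _ = ∑ k, ∑ i, (S⁻¹ j i * S i k) • X k := by
          refine Finset.sum_congr rfl fun k _ => Finset.sum_smul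
      _ = ∑ i, ∑ k, (S⁻¹ j i * S i k) • X k := Finset.sum_comm
      _ = ∑ i, S⁻¹ j i • ∑ k, S i k • X k := by
          refine Finset.sum_congr rfl fun i _ => (h1 i).symm
  · have expand : ∀ i : Fin n, (∑ j, S i j • X j) * (∑ k, S i k • X k)
        = ∑ j, ∑ k, (S i j * S i k) • ((X j : MvPolynomial (Fin n) ℝ) * X k) := by
      intro i
      rw [Finset.sum_mul]
      refine Finset.sum_congr rfl fun j _ => ?_
      rw [Finset.mul_sum]
      refine Finset.sum_congr rfl fun k _ => ?_
      rw [smul_mul_smul_comm]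
    calc ∑ i, (∑ j, S i j • X j) * (∑ k, S i k • X k)
        = ∑ i, ∑ j, ∑ k, (S i j * S i k) • ((X j : MvPolynomial (Fin n) ℝ) * X k) :=
          Finset.sum_congr rfl fun i _ => expand i
      _ = ∑ j, ∑ i, ∑ k, (S i j * S i k) • ((X j : MvPolynomial (Fin n) ℝ) * X k) :=
          Finset.sum_comm
      _ = ∑ j, ∑ k, (∑ i, S i j * S i k) • ((X j : MvPolynomial (Fin n) ℝ) * X k) := by
          refine Finset.sum_congr rfl fun j _ => ?_
          rw [Finset.sum_comm]
          refine Finset.sum_congr rfl fun k _ => (Finset.sum_smul).symm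
      _ = ∑ j, ∑ k, c j k • ((X j : MvPolynomial (Fin n) ℝ) * X k) := by
          refine Finset.sum_congr rfl fun j _ => Finset.sum_congr rfl fun k _ => ?_
          congr 1
          have h2 : ∑ i, S i j * S i k = ∑ i, S j i * S i k :=
            Finset.sum_congr rfl fun i _ => by rw [hSsymm i j]
          rw [h2, ← Matrix.mul_apply, hS2, hMq, Matrix.of_apply]
      _ = q := hrep.symm

lemma exists_div (ℓ : Fin n → MvPolynomial (Fin n) ℝ)
    (hspan : ∀ j, ∃ α : Fin n → ℝ, (X j : MvPolynomial (Fin n) ℝ) = ∑ i, α i • ℓ i)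
    (h : MvPolynomial (Fin n) ℝ) (k : ℕ) (hh : h.IsHomogeneous (k+1)) :
    ∃ c : Fin n → MvPolynomial (Fin n) ℝ,
      (∀ i, (c i).IsHomogeneous k) ∧ ∑ i, ℓ i * c i = h := by
  classical
  have key : ∀ m ∈ h.support, ∃ cm : Fin n → MvPolynomial (Fin n) ℝ,
      (∀ i, (cm i).IsHomogeneous k) ∧ ∑ i, ℓ i * cm i = monomial m (coeff m h) := by
    intro m hm
    have hdeg : m.degree = k + 1 := by
      rw [Finsupp.degree_eq_weight_one]
      exact hh (mem_support_iff.1 hm)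
    obtain ⟨j, m', hm', rfl⟩ := exists_single_add hdeg
    obtain ⟨α, hα⟩ := hspan j
    refine ⟨fun i => α i • (coeff (Finsupp.single j 1 + m') h • monomial m' 1), ?_, ?_⟩
    · intro i
      exact isHomog_smul _ (isHomog_smul _ (isHomogeneous_monomial _ hm'))
    · have step : ∀ i : Fin n, ℓ i * (α i • (coeff (Finsupp.single j 1 + m') h • monomial m' 1))
          = (α i • ℓ i) * (coeff (Finsupp.single j 1 + m') h • monomial m' 1) := by
        intro i
        rw [mul_smul_comm, smul_mul_assoc]
      rw [Finset.sum_congr rfl fun i _ => step i, ← Finset.sum_mul, ← hα]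
      rw [mul_smul_comm, X, monomial_mul, one_mul, smul_monomial, smul_eq_mul, mul_one]
  choose g hg1 hg2 using key
  refine ⟨fun i => ∑ m ∈ h.support.attach, g m.1 m.2 i, ?_, ?_⟩
  · intro i
    exact IsHomogeneous.sum _ _ _ fun m _ => hg1 m.1 m.2 i
  · have swap : ∑ i, ℓ i * ∑ m ∈ h.support.attach, g m.1 m.2 i
        = ∑ m ∈ h.support.attach, ∑ i, ℓ i * g m.1 m.2 i := by
      rw [Finset.sum_comm]
      exact Finset.sum_congr rfl fun m _ => Finset.mul_sum _ _ _
    rw [swap, Finset.sum_congr rfl fun m (_ : m ∈ h.support.attach) => hg2 m.1 m.2,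
      Finset.sum_attach h.support fun m => monomial m (coeff m h)]
    exact support_sum_monomial_coeff h

lemma hc_eq_zero_of_coeff_eq_zero {p : MvPolynomial (Fin n) ℝ} {d : ℕ}
    (h : ∀ e : Fin n →₀ ℕ, e.degree = d → coeff e p = 0) :
    homogeneousComponent d p = 0 := by
  ext e
  rw [coeff_homogeneousComponent, coeff_zero]
  split_ifs with hh
  · exact h e hh
  · rfl

/-- One Newton step: the corrections. -/
noncomputable def tstep (ℓ : Fin n → MvPolynomial (Fin n) ℝ)
    (hspan : ∀ j, ∃ α : Fin n → ℝ, (X j : MvPolynomial (Fin n) ℝ) = ∑ i, α i • ℓ i)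
    (p : MvPolynomial (Fin n) ℝ) (m : ℕ) : Fin n → MvPolynomial (Fin n) ℝ :=
  Classical.choose (exists_div ℓ hspan ((1/2:ℝ) • homogeneousComponent (m+3) p) (m+2)
    (isHomog_smul _ (homogeneousComponent_isHomogeneous _ _)))

lemma tstep_spec (ℓ : Fin n → MvPolynomial (Fin n) ℝ)
    (hspan : ∀ j, ∃ α : Fin n → ℝ, (X j : MvPolynomial (Fin n) ℝ) = ∑ i, α i • ℓ i)
    (p : MvPolynomial (Fin n) ℝ) (m : ℕ) :
    (∀ i, ((tstep ℓ hspan p m) i).IsHomogeneous (m+2)) ∧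
      ∑ i, ℓ i * tstep ℓ hspan p m i = (1/2:ℝ) • homogeneousComponent (m+3) p := by
  unfold tstep
  exact Classical.choose_spec (exists_div ℓ hspan ((1/2:ℝ) • homogeneousComponent (m+3) p) (m+2)
    (isHomog_smul _ (homogeneousComponent_isHomogeneous _ _)))

/-- The Newton iteration sequence. -/
noncomputable def tseq (ℓ : Fin n → MvPolynomial (Fin n) ℝ)
    (hspan : ∀ j, ∃ α : Fin n → ℝ, (X j : MvPolynomial (Fin n) ℝ) = ∑ i, α i • ℓ i)
    (f : MvPolynomial (Fin n) ℝ) : ℕ → Fin n → MvPolynomial (Fin n) ℝ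
  | 0 => ℓ
  | (m+1) => fun i => tseq ℓ hspan f m i +
      tstep ℓ hspan (f - ∑ i, tseq ℓ hspan f m i * tseq ℓ hspan f m i) m i

section

variable (ℓ : Fin n → MvPolynomial (Fin n) ℝ)
    (hspan : ∀ j, ∃ α : Fin n → ℝ, (X j : MvPolynomial (Fin n) ℝ) = ∑ i, α i • ℓ i)
    (f : MvPolynomial (Fin n) ℝ)

lemma tseq_spec (hℓ : ∀ i, (ℓ i).IsHomogeneous 1)
    (h0 : homogeneousComponent 0 f = 0) (h1 : homogeneousComponent 1 f = 0)
    (hq : ∑ i, ℓ i * ℓ i = homogeneousComponent 2 f) :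
    ∀ m, (∀ i e, e.degree ≤ 1 → coeff e (tseq ℓ hspan f m i) = coeff e (ℓ i)) ∧
         (∀ d, d ≤ m + 2 →
           homogeneousComponent d (f - ∑ i, tseq ℓ hspan f m i * tseq ℓ hspan f m i) = 0) := by
  intro m
  induction m with
  | zero =>
    refine ⟨fun i e _ => rfl, fun d hd => ?_⟩
    have hrw : f - ∑ i, tseq ℓ hspan f 0 i * tseq ℓ hspan f 0 i
        = f - homogeneousComponent 2 f := by
      rw [show tseq ℓ hspan f 0 = ℓ from rfl, hq]
    rw [hrw, map_sub]
    interval_cases d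
    · rw [h0, hc_eq_zero_of_isHomog (homogeneousComponent_isHomogeneous 2 f) (by omega), sub_zero]
    · rw [h1, hc_eq_zero_of_isHomog (homogeneousComponent_isHomogeneous 2 f) (by omega), sub_zero]
    · rw [hc_self_of_isHomog (homogeneousComponent_isHomogeneous 2 f), sub_self]
  | succ m ih =>
    set t := tseq ℓ hspan f m with ht
    set c := tstep ℓ hspan (f - ∑ i, t i * t i) m with hcdef
    have hch : ∀ i, (c i).IsHomogeneous (m+2) := (tstep_spec ℓ hspan _ m).1
    have hcsum : ∑ i, ℓ i * c i
        = (1/2:ℝ) • homogeneousComponent (m+3) (f - ∑ i, t i * t i) :=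
      (tstep_spec ℓ hspan _ m).2
    have hceq : ∀ i, tseq ℓ hspan f (m+1) i = t i + c i := fun i => rfl
    have hA : ∀ i e, e.degree ≤ 1 → coeff e (tseq ℓ hspan f (m+1) i) = coeff e (ℓ i) := by
      intro i e he
      rw [hceq i, coeff_add, (hch i).coeff_eq_zero (by omega), add_zero]
      exact ih.1 i e he
    refine ⟨hA, fun d hd => ?_⟩
    have key : f - ∑ i, tseq ℓ hspan f (m+1) i * tseq ℓ hspan f (m+1) i
        = (f - ∑ i, t i * t i) - (∑ i, ℓ i * c i + ∑ i, ℓ i * c i)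
          - ∑ i, ((t i - ℓ i) * c i + (t i - ℓ i) * c i + c i * c i) := by
      have hsum : ∑ i, tseq ℓ hspan f (m+1) i * tseq ℓ hspan f (m+1) i
          = ∑ i, t i * t i + (∑ i, ℓ i * c i + ∑ i, ℓ i * c i)
            + ∑ i, ((t i - ℓ i) * c i + (t i - ℓ i) * c i + c i * c i) := by
        rw [← Finset.sum_add_distrib, ← Finset.sum_add_distrib, ← Finset.sum_add_distrib]
        refine Finset.sum_congr rfl fun i _ => ?_
        rw [hceq i]; ring
      rw [hsum]; ring
    rw [key, map_sub, map_sub, map_add]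
    have hR : homogeneousComponent d
        (∑ i, ((t i - ℓ i) * c i + (t i - ℓ i) * c i + c i * c i)) = 0 := by
      rw [map_sum]
      refine Finset.sum_eq_zero fun i _ => ?_
      have hlow : ∀ e : Fin n →₀ ℕ, e.degree ≤ m + 3 → coeff e ((t i - ℓ i) * c i) = 0 := by
        intro e he
        classical
        rw [MvPolynomial.coeff_mul]
        refine Finset.sum_eq_zero fun uv huv => ?_
        rw [Finset.HasAntidiagonal.mem_antidiagonal] at huv
        by_cases hv : coeff uv.2 (c i) = 0
        · rw [hv, mul_zero]
        · have hvdeg : uv.2.degree = m + 2 := by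
            by_contra hne
            exact hv ((hch i).coeff_eq_zero hne)
          have hudeg : uv.1.degree ≤ 1 := by
            have hde : uv.1.degree + uv.2.degree = e.degree := by rw [← deg_add, huv]
            omega
          have hu0 : coeff uv.1 (t i - ℓ i) = 0 := by
            rw [coeff_sub, ih.1 i uv.1 hudeg, sub_self]
          rw [hu0, zero_mul]
      rw [map_add, map_add]
      have h1' : homogeneousComponent d ((t i - ℓ i) * c i) = 0 :=
        hc_eq_zero_of_coeff_eq_zero fun e he => hlow e (by omega)
      have h2' : homogeneousComponent d (c i * c i) = 0 :=
        hc_eq_zero_of_isHomog ((hch i).mul (hch i)) (by omega)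
      rw [h1', h2', add_zero, add_zero]
    rw [hR, sub_zero]
    by_cases hd3 : d = m + 3
    · subst hd3
      rw [hcsum, map_smul,
        hc_self_of_isHomog (homogeneousComponent_isHomogeneous (m+3) _)]
      have hhalf : (1/2:ℝ) • homogeneousComponent (m+3) (f - ∑ i, t i * t i)
            + (1/2:ℝ) • homogeneousComponent (m+3) (f - ∑ i, t i * t i)
          = homogeneousComponent (m+3) (f - ∑ i, t i * t i) := by
        rw [← add_smul]; norm_num
      rw [hhalf, sub_self]
    · have hT1 : homogeneousComponent d (f - ∑ i, t i * t i) = 0 := ih.2 d (by omega)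
      have hT2 : homogeneousComponent d (∑ i, ℓ i * c i) = 0 := by
        rw [hcsum, map_smul,
          hc_eq_zero_of_isHomog (homogeneousComponent_isHomogeneous (m+3) _) hd3, smul_zero]
      rw [hT1, hT2, add_zero, sub_zero]

lemma tseq_stab : ∀ m m', m ≤ m' → ∀ i (e : Fin n →₀ ℕ), e.degree ≤ m + 1 →
    coeff e (tseq ℓ hspan f m' i) = coeff e (tseq ℓ hspan f m i) := by
  intro m m' hmm'
  induction m' with
  | zero =>
    have hm0 : m = 0 := by omega
    subst hm0
    exact fun i e _ => rfl
  | succ m' ih =>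
    intro i e he
    rcases Nat.eq_or_lt_of_le hmm' with heq | hlt
    · rw [heq]
    · have hm' : m ≤ m' := by omega
      have hstep : tseq ℓ hspan f (m'+1) i = tseq ℓ hspan f m' i +
          tstep ℓ hspan (f - ∑ i, tseq ℓ hspan f m' i * tseq ℓ hspan f m' i) m' i := rfl
      rw [hstep, coeff_add,
        ((tstep_spec ℓ hspan _ m').1 i).coeff_eq_zero (by omega), add_zero]
      exact ih hm' i e he

end



lemma coeff_mul_congr {a b a' b' : MvPowerSeries (Fin n) ℝ} {m : ℕ}
    (ha : ∀ e : Fin n →₀ ℕ, e.degree ≤ m → MvPowerSeries.coeff e a = MvPowerSeries.coeff e a')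
    (hb : ∀ e : Fin n →₀ ℕ, e.degree ≤ m → MvPowerSeries.coeff e b = MvPowerSeries.coeff e b') :
    ∀ e : Fin n →₀ ℕ, e.degree ≤ m →
      MvPowerSeries.coeff e (a * b) = MvPowerSeries.coeff e (a' * b') := by
  intro e he
  classical
  rw [MvPowerSeries.coeff_mul, MvPowerSeries.coeff_mul]
  refine Finset.sum_congr rfl fun uv huv => ?_
  rw [Finset.HasAntidiagonal.mem_antidiagonal] at huv
  have hdeg : uv.1.degree + uv.2.degree = e.degree := by rw [← deg_add, huv]
  rw [ha uv.1 (by omega), hb uv.2 (by omega)]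

end SosPowerSeriesAux

/-- If `f(0) = 0`, the degree-0 and degree-1 homogeneous components of `f` vanish and the
quadratic part `f₂` is positive definite, then `f` is a sum of squares of formal power series. -/
theorem sos_powerSeries_of_posdef_quadratic_part (n : ℕ) (f : MvPolynomial (Fin n) ℝ)
    (hf0 : MvPolynomial.eval (0 : Fin n → ℝ) f = 0)
    (h0 : MvPolynomial.homogeneousComponent 0 f = 0)
    (h1 : MvPolynomial.homogeneousComponent 1 f = 0)
    (hpd : ∀ x : Fin n → ℝ, x ≠ 0 →
      0 < MvPolynomial.eval x (MvPolynomial.homogeneousComponent 2 f)) :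
    IsSumSq (f : MvPowerSeries (Fin n) ℝ) := by
  classical
  obtain ⟨ℓ, hℓ, hspan, hqℓ⟩ := SosPowerSeriesAux.exists_linear_forms
    (MvPolynomial.homogeneousComponent 2 f)
    (MvPolynomial.homogeneousComponent_isHomogeneous 2 f) hpd
  have spec := SosPowerSeriesAux.tseq_spec ℓ hspan f hℓ h0 h1 hqℓ
  set t := SosPowerSeriesAux.tseq ℓ hspan f with htdef
  set P : Fin n → MvPowerSeries (Fin n) ℝ :=
    fun i e => MvPolynomial.coeff e (t e.degree i) with hPdef
  have hstable : ∀ (m : ℕ) (e : Fin n →₀ ℕ), e.degree ≤ m → ∀ i,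
      MvPowerSeries.coeff e (P i)
        = MvPowerSeries.coeff e ((t m i : MvPolynomial (Fin n) ℝ) :
            MvPowerSeries (Fin n) ℝ) := by
    intro m e he i
    rw [MvPolynomial.coeff_coe]
    have h1' : MvPowerSeries.coeff e (P i) = MvPolynomial.coeff e (t e.degree i) := rfl
    rw [h1']
    exact (SosPowerSeriesAux.tseq_stab ℓ hspan f e.degree m he i e (by omega)).symm
  have hmain : (↑f : MvPowerSeries (Fin n) ℝ) = ∑ i, P i * P i := by
    apply MvPowerSeries.ext; intro e
    rw [map_sum]
    have hcong : ∀ i : Fin n, MvPowerSeries.coeff e (P i * P i)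
        = MvPowerSeries.coeff e
          (((t e.degree i : MvPolynomial (Fin n) ℝ) : MvPowerSeries (Fin n) ℝ)
            * ((t e.degree i : MvPolynomial (Fin n) ℝ) : MvPowerSeries (Fin n) ℝ)) :=
      fun i => SosPowerSeriesAux.coeff_mul_congr
        (fun e' he' => hstable e.degree e' he' i) (fun e' he' => hstable e.degree e' he' i)
        e le_rfl
    rw [Finset.sum_congr rfl fun i _ => hcong i]
    have hterm : ∀ i : Fin n, MvPowerSeries.coeff e
          (((t e.degree i : MvPolynomial (Fin n) ℝ) : MvPowerSeries (Fin n) ℝ)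
            * ((t e.degree i : MvPolynomial (Fin n) ℝ) : MvPowerSeries (Fin n) ℝ))
        = MvPolynomial.coeff e (t e.degree i * t e.degree i) := by
      intro i
      rw [← MvPolynomial.coe_mul, MvPolynomial.coeff_coe]
    rw [Finset.sum_congr rfl fun i _ => hterm i, MvPolynomial.coeff_coe,
      ← MvPolynomial.coeff_sum]
    have hz : MvPolynomial.coeff e (f - ∑ i, t e.degree i * t e.degree i) = 0 :=
      SosPowerSeriesAux.coeff_eq_zero_of_hc ((spec e.degree).2 e.degree (by omega))
    rw [MvPolynomial.coeff_sub, sub_eq_zero] at hz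
    exact hz
  rw [hmain]
  exact IsSumSq.sum_mul_self Finset.univ P
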